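/- Let P be a Borel probability measure on ℝ^k and u ∈ ℝ^k with ‖u‖₂ < 1. Then any minimizer θ* of the map θ ↦ ∫ (‖y-θ‖₂ - ‖y‖₂ - ⟨u,θ⟩) dP(y) satisfies ‖θ*‖₂ ≤ cK, where c = 3/(1-‖u‖₂) and K is any positive number such that P(‖Y‖₂ ≤ K) > 1 - ε for some 0 < ε < (1/c)/((1/c) + ‖u‖₂ + 1). -/

import Mathlib

open scoped RealInnerProductSpace
open MeasureTheory

set_option maxHeartbeats 1000000 in
/-- Any minimizer of the geometric-quantile objective lies in the ball of
radius `c*K`, where `K` is such that `P(‖Y‖ ≤ K) > 1 - ε`. -/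
theorem stmt5 {k : ℕ} (P : Measure (EuclideanSpace ℝ (Fin k)))
    [IsProbabilityMeasure P]
    (u : EuclideanSpace ℝ (Fin k)) (hu : ‖u‖ < 1)
    (c : ℝ) (hc : c = 3 / (1 - ‖u‖))
    (ε : ℝ) (hε : 0 < ε) (hε' : ε < (1 / c) / (1 / c + ‖u‖ + 1))
    (K : ℝ) (hK : 0 < K)
    (hPK : 1 - ε < (P {y | ‖y‖ ≤ K}).toReal)
    (θstar : EuclideanSpace ℝ (Fin k))
    (hmin : ∀ θ : EuclideanSpace ℝ (Fin k),
      ∫ y, (‖y - θstar‖ - ‖y‖ - ⟪u, θstar⟫) ∂P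
        ≤ ∫ y, (‖y - θ‖ - ‖y‖ - ⟪u, θ⟫) ∂P) :
    ‖θstar‖ ≤ c * K := by
  by_contra hcon
  push_neg at hcon
  set t := ‖u‖ with ht
  set a := ‖θstar‖ with ha
  have ht0 : 0 ≤ t := norm_nonneg u
  have ht1 : t < 1 := hu
  have htpos : 0 < 1 - t := by linarith
  have hc3 : c * (1 - t) = 3 := by
    rw [hc]; field_simp
  have hcpos : 0 < c := by rw [hc]; positivity
  have hcge : 3 ≤ c := by nlinarith
  have haK : 2 * K < a := by nlinarith
  have hapos : 0 < a := by nlinarith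
  -- the ε bound: 2 ε (c-1) < 1
  have hd : 0 < 1 / c + t + 1 := by positivity
  have hεd : ε * (1 / c + t + 1) < 1 / c := (lt_div_iff₀ hd).mp hε'
  have hεc : ε * (1 + t * c + c) < 1 := by
    have := mul_lt_mul_of_pos_right hεd hcpos
    have hcc : (1 / c) * c = 1 := by field_simp
    nlinarith [this, hcc]
  have hεb : ε * (2 * (c - 1)) < 1 := by nlinarith [hε, hc3, hεc]
  -- 1 - 2ε - t > 0
  have h2ε : 2 * ε * (2 + t) < 1 - t := by
    have h := mul_lt_mul_of_pos_right hεb htpos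
    nlinarith [h, hc3, hε]
  have h1 : 0 < 1 - 2 * ε - t := by nlinarith [h2ε, hε, ht0]
  -- the set A and its probability
  set A : Set (EuclideanSpace ℝ (Fin k)) := {y | ‖y‖ ≤ K} with hAdef
  have hA : MeasurableSet A := measurableSet_le measurable_norm measurable_const
  set p : ℝ := (P A).toReal with hp
  have hpε : 1 - ε < p := hPK
  have hp1 : p ≤ 1 := by
    have h := prob_le_one (μ := P) (s := A)
    simpa using ENNReal.toReal_mono ENNReal.one_ne_top h
  have hcompl : (P Aᶜ).toReal = 1 - p := by
    rw [prob_compl_eq_one_sub hA, ENNReal.toReal_sub_of_le prob_le_one ENNReal.one_ne_top]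
    simp
    rfl
  -- the function f and its integrability
  set f : EuclideanSpace ℝ (Fin k) → ℝ := fun y => ‖y - θstar‖ - ‖y‖ with hfdef
  have hfmeas : AEStronglyMeasurable f P :=
    (((continuous_id.sub continuous_const).norm).sub continuous_norm).aestronglyMeasurable
  have hf_int : Integrable f P := by
    refine (integrable_const a).mono' hfmeas ?_
    filter_upwards with y
    rw [Real.norm_eq_abs]
    have h := abs_norm_sub_norm_le (y - θstar) y
    have : y - θstar - y = -θstar := by abel
    rw [this, norm_neg] at h
    exact h
  -- the minorant g
  set g : EuclideanSpace ℝ (Fin k) → ℝ :=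
    fun y => A.indicator (fun _ => a - 2 * K) y + Aᶜ.indicator (fun _ => -a) y with hgdef
  have hg_int : Integrable g P :=
    ((integrable_const _).indicator hA).add ((integrable_const _).indicator hA.compl)
  have hle : ∀ y, g y ≤ f y := by
    intro y
    by_cases hy : y ∈ A
    · have hy' : y ∉ Aᶜ := by simp [hy]
      have hyK : ‖y‖ ≤ K := hy
      have hn : a - ‖y‖ ≤ ‖y - θstar‖ := by
        have h := norm_sub_norm_le θstar y
        rw [norm_sub_rev] at h
        linarith [h]
      simp only [hgdef, hfdef, Set.indicator_of_mem hy, Set.indicator_of_notMem hy']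
      linarith
    · have hy' : y ∈ Aᶜ := hy
      have hn : ‖y‖ - ‖y - θstar‖ ≤ a := by
        have h := norm_sub_norm_le y (y - θstar)
        have : y - (y - θstar) = θstar := by abel
        rw [this] at h
        exact h
      simp only [hgdef, hfdef, Set.indicator_of_notMem hy, Set.indicator_of_mem hy']
      linarith
  have hfg : ∫ y, g y ∂P ≤ ∫ y, f y ∂P := integral_mono hg_int hf_int hle
  have hgval : ∫ y, g y ∂P = (a - 2 * K) * p + (-a) * (1 - p) := by
    rw [hgdef]
    rw [integral_add ((integrable_const _).indicator hA) ((integrable_const _).indicator hA.compl)]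
    rw [integral_indicator_const _ hA, integral_indicator_const _ hA.compl, measureReal_def, measureReal_def, hcompl]
    simp [mul_comm]
    exact Or.inl rfl
  -- M(θstar) ≤ 0
  have hM0 : ∫ y, (‖y - θstar‖ - ‖y‖ - ⟪u, θstar⟫) ∂P ≤ 0 := by
    have h := hmin 0
    simpa using h
  have hsplit : ∫ y, (‖y - θstar‖ - ‖y‖ - ⟪u, θstar⟫) ∂P
      = (∫ y, f y ∂P) - ⟪u, θstar⟫ := by
    rw [show (fun y => ‖y - θstar‖ - ‖y‖ - ⟪u, θstar⟫) = fun y => f y - ⟪u, θstar⟫ from rfl]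
    rw [integral_sub hf_int (integrable_const _), integral_const]
    simp
  have hinner : ⟪u, θstar⟫ ≤ t * a := real_inner_le_norm u θstar
  have hS : (a - 2 * K) * p - a * (1 - p) - t * a ≤ 0 := by
    rw [hsplit] at hM0
    linarith [hfg, hgval, hinner, hM0]
  clear hmin hfg hgval hM0 hsplit hinner hle hg_int hf_int hfmeas hgdef hfdef hcompl hA hε' hεd hd
  clear_value p a t
  clear hp ha ht g f hAdef A
  have h4 : a * (1 - 2 * ε - t) - 2 * K * (1 - ε) < 0 := by
    have e1 : 0 < (a - 2 * K) * (p - (1 - ε)) :=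
      mul_pos (by linarith) (by linarith)
    have e2 : 0 < a * (ε - (1 - p)) := mul_pos hapos (by linarith)
    nlinarith [hS, e1, e2]
  have h5 : K * (c * (1 - t)) = K * 3 := by rw [hc3]
  have hεbK : ε * (2 * (c - 1)) * K < 1 * K := mul_lt_mul_of_pos_right hεb hK
  have hprod : c * K * (1 - 2 * ε - t) < a * (1 - 2 * ε - t) :=
    mul_lt_mul_of_pos_right hcon h1
  linarith [h4, hprod, h5, hεbK]
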